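/- In the abstract perturbation setting, suppose that ‖U‖ ≤ 1, that the operator FγA^{-1/2} : 𝔥 → 𝔊 is compact, and that for some θ > 0 the singular number bound n^sup(FγA^{-1}, 2θ) = 𝔪 < ∞ holds. Then the resolvent difference R_V = A^{-1} − (A_V)^{-1} satisfies n^sup(R_V, θ) ≤ 2𝔪. -/

import Mathlib

open scoped ENNReal NNReal
open Filter MeasureTheory Topology

noncomputable section

namespace SingPert

/-! ### Spectral counting functions.

For a compact operator `K`, `snCount K lam` is the number of singular values of `K`
exceeding `lam` (expressed through the variational / Glazman characterization:
the maximal dimension of a subspace on which `‖K x‖ > lam * ‖x‖`), and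
`evCount K lam` is the number of eigenvalues of a compact self-adjoint `K`
exceeding `lam` (maximal dimension of a subspace on which `⟪K x, x⟫ > lam ‖x‖²`).
`nsup K θ = limsup_{lam → 0+} lam ^ θ * n(lam, K)` and `nsupPos`, `nsupNeg` are the
corresponding asymptotic characteristics for positive/negative eigenvalues. -/

section Counting

variable {H : Type*} {G : Type*}
  [NormedAddCommGroup H] [InnerProductSpace ℂ H]
  [NormedAddCommGroup G] [InnerProductSpace ℂ G]

/-- Distribution function of singular values (variational characterization). -/
def snCount (K : H →L[ℂ] G) (lam : ℝ) : ℝ≥0∞ :=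
  ⨆ (p : Submodule ℂ H) (_ : ∀ x ∈ p, x ≠ 0 → lam * ‖x‖ < ‖K x‖),
    (Module.finrank ℂ ↥p : ℝ≥0∞)

/-- `n^sup(K, θ) = limsup_{λ→0+} λ^θ n(λ, K)` for singular values. -/
def nsup (K : H →L[ℂ] G) (θ : ℝ) : ℝ≥0∞ :=
  Filter.limsup (fun lam : ℝ => ENNReal.ofReal (lam ^ θ) * snCount K lam) (𝓝[>] (0:ℝ))

/-- Distribution function of positive eigenvalues of a self-adjoint operator
(variational characterization). -/
def evCount (K : H →L[ℂ] H) (lam : ℝ) : ℝ≥0∞ :=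
  ⨆ (p : Submodule ℂ H) (_ : ∀ x ∈ p, x ≠ 0 → lam * ‖x‖ ^ 2 < (inner ℂ (K x) x : ℂ).re),
    (Module.finrank ℂ ↥p : ℝ≥0∞)

/-- `n^sup_+(K, θ) = limsup_{λ→0+} λ^θ n_+(λ, K)`. -/
def nsupPos (K : H →L[ℂ] H) (θ : ℝ) : ℝ≥0∞ :=
  Filter.limsup (fun lam : ℝ => ENNReal.ofReal (lam ^ θ) * evCount K lam) (𝓝[>] (0:ℝ))

/-- `n^sup_-(K, θ) = limsup_{λ→0+} λ^θ n_-(λ, K)`. -/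
def nsupNeg (K : H →L[ℂ] H) (θ : ℝ) : ℝ≥0∞ := nsupPos (-K) θ

end Counting

/-! ### The abstract perturbation setting.

`A ≥ c₀ > 0` is a positive self-adjoint operator in the Hilbert space `H` with form
domain `𝔥¹ = D(A^{1/2})`, which is identified isometrically with `H` through the map
`u = A^{-1/2} v`.  All objects of the setting are encoded through the bounded
operators appearing after this identification:
* `sqrtAinv` is the bounded operator `A^{-1/2}` (self-adjoint, injective, with
  `‖A^{-1/2} f‖² ≤ c₀⁻¹ ‖f‖²`, which expresses `A ≥ c₀`);
* `S = F ∘ γ ∘ A^{-1/2} : H → G` is the bounded composite of the boundary operator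
  `γ : 𝔥¹ → G` and the operator `F` (whose domain contains `γ 𝔥¹`);
* `U` is a bounded self-adjoint operator in `G`;
* the perturbing quadratic form is `v[u] = (U F γ u, F γ u)_G`, i.e. after the
  substitution `u = A^{-1/2} f` it is `f ↦ ⟪U (S f), S f⟫`, and the positivity
  assumption `a[u] + v[u] ≥ c·a[u]` becomes `‖f‖² + re ⟪U (S f), S f⟫ ≥ c ‖f‖²`;
* `T = (F γ A^{-1/2})^* U (F γ A^{-1/2})` is the Birman–Schwinger operator;
* `A_V` is the self-adjoint operator defined by the closed quadratic form
  `a[u] + v[u]`; variationally, `u = A_V^{-1} h ∈ 𝔥¹` is characterized by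
  `a(u,w) + v(u,w) = (h, w)_H` for all `w ∈ 𝔥¹`, which after the substitution
  `u = A^{-1/2}(X h)`, `w = A^{-1/2} g` reads `(1 + T) X = A^{-1/2}` together with
  `A_V^{-1} = A^{-1/2} X`.  The fields `X`, `hX`, `AVinv`, `hAVinv` encode exactly
  this variational characterization. -/

section Abstract

variable (H : Type*) (G : Type*)
  [NormedAddCommGroup H] [InnerProductSpace ℂ H] [CompleteSpace H]
  [NormedAddCommGroup G] [InnerProductSpace ℂ G] [CompleteSpace G]

/-- The unperturbed positive self-adjoint operator `A ≥ c₀ > 0`, encoded through its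
bounded inverse square root `A^{-1/2}`. -/
structure BasePerturbation where
  sqrtAinv : H →L[ℂ] H
  sqrtAinv_sa : IsSelfAdjoint sqrtAinv
  sqrtAinv_inj : Function.Injective sqrtAinv
  c₀ : ℝ
  c₀_pos : 0 < c₀
  lower_bound : ∀ f : H, ‖sqrtAinv f‖ ^ 2 ≤ c₀⁻¹ * ‖f‖ ^ 2

variable {H G}

/-- A perturbation `V` of `A` in the abstract setting, together with the perturbed
operator `A_V` (encoded through its bounded inverse) and the Birman–Schwinger
operator `T`. -/
structure PerturbationData (B : BasePerturbation H) where
  /-- `S = F γ A^{-1/2}`, a bounded operator from `H` to `G`. -/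
  S : H →L[ℂ] G
  /-- The bounded self-adjoint operator `U` in `G`. -/
  U : G →L[ℂ] G
  U_sa : IsSelfAdjoint U
  /-- The Birman–Schwinger operator `T = (F γ A^{-1/2})^* U (F γ A^{-1/2})`. -/
  T : H →L[ℂ] H
  hT : T = (ContinuousLinearMap.adjoint S).comp (U.comp S)
  /-- positivity of the perturbed quadratic form: `a[u] + v[u] ≥ c a[u]`. -/
  pos : ∃ c : ℝ, 0 < c ∧ ∀ f : H, c * ‖f‖ ^ 2 ≤ ‖f‖ ^ 2 + (inner ℂ (U (S f)) (S f) : ℂ).re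
  /-- `X = A^{1/2} A_V^{-1}`. -/
  X : H →L[ℂ] H
  /-- the variational characterization of `A_V`: `(1 + T) X = A^{-1/2}`. -/
  hX : ((1 : H →L[ℂ] H) + T).comp X = B.sqrtAinv
  /-- the bounded inverse of the perturbed operator `A_V`. -/
  AVinv : H →L[ℂ] H
  hAVinv : AVinv = B.sqrtAinv.comp X

end Abstract

section Aux

open ContinuousLinearMap in
lemma finrank_sup_le' {H : Type*} [NormedAddCommGroup H] [InnerProductSpace ℂ H]
    (s t : Submodule ℂ H) [FiniteDimensional ℂ s] [FiniteDimensional ℂ t] :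
    Module.finrank ℂ ↥(s ⊔ t) ≤ Module.finrank ℂ s + Module.finrank ℂ t := by
  have h := Submodule.finrank_sup_add_finrank_inf_eq s t
  omega

variable {H : Type*} {G : Type*}
  [NormedAddCommGroup H] [InnerProductSpace ℂ H]
  [NormedAddCommGroup G] [InnerProductSpace ℂ G]

lemma le_snCount {K : H →L[ℂ] G} {lam : ℝ} {p : Submodule ℂ H}
    (hp : ∀ x ∈ p, x ≠ 0 → lam * ‖x‖ < ‖K x‖) :
    (Module.finrank ℂ ↥p : ℝ≥0∞) ≤ snCount K lam :=
  le_iSup₂_of_le p hp le_rfl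

lemma snCount_le_of_forall {K : H →L[ℂ] G} {lam : ℝ} {M : ℕ}
    (h : ∀ p : Submodule ℂ H, (∀ x ∈ p, x ≠ 0 → lam * ‖x‖ < ‖K x‖) →
      Module.finrank ℂ ↥p ≤ M) : snCount K lam ≤ M := by
  refine iSup₂_le fun p hp => ?_
  exact_mod_cast h p hp

end Aux

section Aux2

variable {H : Type*} {G : Type*}
  [NormedAddCommGroup H] [InnerProductSpace ℂ H]
  [NormedAddCommGroup G] [InnerProductSpace ℂ G]

lemma snCount_ne_top_of_isCompactOperator {C : H →L[ℂ] G} (hC : IsCompactOperator C)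
    {ε : ℝ} (hε : 0 < ε) : snCount C ε ≠ ⊤ := by
  -- image of the closed unit ball is contained in a compact set
  have hC' : IsCompactOperator (⇑(C : H →ₗ[ℂ] G)) := by simpa using hC
  obtain ⟨K, hK, hKim⟩ := hC'.image_subset_compact_of_bounded
    (Metric.isBounded_closedBall (x := (0:H)) (r := 1))
  -- finite ε√2/2 net of K
  obtain ⟨t, htf, htc⟩ := (Metric.totallyBounded_iff.mp hK.totallyBounded)
    (ε * Real.sqrt 2 / 2) (by positivity)
  classical
  set M := htf.toFinset.card with hM
  refine ne_top_of_le_ne_top (by simp : ((M:ℕ) : ℝ≥0∞) ≠ ⊤) (snCount_le_of_forall ?_)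
  intro p hp
  by_cases hfd : FiniteDimensional ℂ p
  · -- orthonormal basis of p
    by_contra hlt
    push_neg at hlt
    set n := Module.finrank ℂ p with hn
    have b := stdOrthonormalBasis ℂ p
    -- map each basis vector image to a net point
    have hmem : ∀ i : Fin n, ∃ y ∈ htf.toFinset, C (b i : H) ∈ Metric.ball y (ε * Real.sqrt 2 / 2) := by
      intro i
      have hball : (b i : H) ∈ Metric.closedBall (0:H) 1 := by
        simp only [Metric.mem_closedBall, dist_zero_right]
        have : ‖(b i : H)‖ = 1 := b.orthonormal.1 i
        simp [this]
      have : C (b i : H) ∈ K := hKim ⟨_, hball, rfl⟩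
      have := htc this
      simp only [Set.mem_iUnion] at this
      obtain ⟨y, hy, hmem⟩ := this
      exact ⟨y, htf.mem_toFinset.mpr hy, hmem⟩
    choose φ hφt hφ using hmem
    -- pigeonhole
    have hcard : Fintype.card { y // y ∈ htf.toFinset } < Fintype.card (Fin n) := by
      simpa [Fintype.card_coe] using hlt
    obtain ⟨i, j, hij, heq⟩ := Fintype.exists_ne_map_eq_of_card_lt
      (fun i : Fin n => (⟨φ i, hφt i⟩ : { y // y ∈ htf.toFinset })) hcard
    -- the vector (b i) - (b j)
    have hbij : (b i : H) - (b j : H) ∈ p := by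
      exact sub_mem (b i).2 (b j).2
    have hinner : (inner (𝕜 := ℂ) ((b i : H)) ((b j : H))) = 0 := by
      exact b.orthonormal.2 hij
    have hnormsq : ‖(b i : H) - (b j : H)‖ ^ 2 = 2 := by
      have h1 : ‖(b i : H)‖ = 1 := b.orthonormal.1 i
      have h2 : ‖(b j : H)‖ = 1 := b.orthonormal.1 j
      rw [@norm_sub_sq ℂ, hinner, h1, h2]
      norm_num
    have hne : (b i : H) - (b j : H) ≠ 0 := by
      intro h
      rw [h] at hnormsq
      norm_num at hnormsq
    have hnorm : ‖(b i : H) - (b j : H)‖ = Real.sqrt 2 := by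
      rw [show (2:ℝ) = ‖(b i : H) - (b j : H)‖ ^ 2 from hnormsq.symm]
      rw [Real.sqrt_sq (norm_nonneg _)]
    have hlt2 : ε * Real.sqrt 2 < ‖C ((b i : H) - (b j : H))‖ := by
      have := hp _ hbij hne
      rwa [hnorm] at this
    have hub : ‖C ((b i : H) - (b j : H))‖ < ε * Real.sqrt 2 := by
      have h1 : dist (C (b i : H)) (φ i) < ε * Real.sqrt 2 / 2 := hφ i
      have h2 : dist (C (b j : H)) (φ j) < ε * Real.sqrt 2 / 2 := hφ j
      have hc : φ i = φ j := congrArg Subtype.val heq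
      rw [map_sub, ← dist_eq_norm]
      calc dist (C (b i : H)) (C (b j : H))
          ≤ dist (C (b i : H)) (φ i) + dist (φ j) (C (b j : H)) := by
            rw [hc]; exact dist_triangle _ _ _
        _ < ε * Real.sqrt 2 / 2 + ε * Real.sqrt 2 / 2 := by
            rw [dist_comm (φ j)]; linarith
        _ = ε * Real.sqrt 2 := by ring
    linarith
  · rw [Module.finrank_of_infinite_dimensional hfd]
    exact Nat.zero_le _

end Aux2

section Aux3

open ContinuousLinearMap

variable {H : Type*} {G : Type*}
  [NormedAddCommGroup H] [InnerProductSpace ℂ H] [CompleteSpace H]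
  [NormedAddCommGroup G] [InnerProductSpace ℂ G] [CompleteSpace G]

lemma exists_good_proj (X : H →L[ℂ] G) {μ : ℝ} (hμ : 0 < μ)
    (hfin : snCount X μ ≠ ⊤) :
    ∃ (V : Submodule ℂ H) (Pi : H →L[ℂ] H), FiniteDimensional ℂ ↥V ∧
      ((Module.finrank ℂ ↥V : ℕ) : ℝ≥0∞) ≤ snCount X μ ∧ IsSelfAdjoint Pi ∧
      (∀ x : H, Pi x ∈ V) ∧ (∀ x : H, ‖X (x - Pi x)‖ ≤ μ * ‖x‖) := by
  classical
  obtain ⟨N, hN⟩ := ENNReal.exists_nat_gt hfin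
  -- every good subspace has finrank ≤ N
  have hgb : ∀ p : Submodule ℂ H, (∀ x ∈ p, x ≠ 0 → μ * ‖x‖ < ‖X x‖) →
      Module.finrank ℂ ↥p ≤ N := by
    intro p hp
    have := (le_snCount hp).trans_lt hN
    exact_mod_cast this.le
  set Pred : ℕ → Prop := fun n => ∃ p : Submodule ℂ H,
    (∀ x ∈ p, x ≠ 0 → μ * ‖x‖ < ‖X x‖) ∧ FiniteDimensional ℂ ↥p ∧
      Module.finrank ℂ ↥p = n with hPred
  have hP0 : Pred 0 := by
    refine ⟨⊥, fun x hx hne => absurd ?_ hne, inferInstance, finrank_bot ℂ H⟩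
    simpa using hx
  set n₀ := Nat.findGreatest Pred N with hn₀
  obtain ⟨p₀, hgood, hfd, hrank⟩ : Pred n₀ := Nat.findGreatest_spec (Nat.zero_le N) hP0
  -- the self-adjoint operator A = X*X - μ²
  set A : H →L[ℂ] H := (ContinuousLinearMap.adjoint X) ∘L X
    - ((μ^2 : ℝ) : ℂ) • (1 : H →L[ℂ] H) with hA
  have hAsa : ∀ u v : H, (inner ℂ (A u) v : ℂ) = inner ℂ u (A v) := by
    intro u v
    simp only [hA, sub_apply, smul_apply, ContinuousLinearMap.one_apply, comp_apply, inner_sub_left,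
      inner_sub_right, inner_smul_left, inner_smul_right, adjoint_inner_left,
      adjoint_inner_right, Complex.conj_ofReal]
  have hre : ∀ z : ℂ, RCLike.re z = z.re := fun z => congrFun RCLike.re_eq_complex_re z
  have hAre : ∀ x : H, (inner ℂ (A x) x : ℂ).re = ‖X x‖^2 - μ^2 * ‖x‖^2 := by
    intro x
    have hxx : (inner ℂ (A x) x : ℂ) = inner ℂ (X x) (X x) - ((μ^2:ℝ):ℂ) * inner ℂ x x := by
      simp only [hA, sub_apply, smul_apply, ContinuousLinearMap.one_apply, comp_apply, inner_sub_left,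
        inner_smul_left, adjoint_inner_left, Complex.conj_ofReal]
    rw [hxx, Complex.sub_re, Complex.re_ofReal_mul]
    simp only [← hre, inner_self_eq_norm_sq]
    try ring
  set V : Submodule ℂ H := p₀.map (A : H →ₗ[ℂ] H) with hV
  haveI : FiniteDimensional ℂ ↥V := Module.Finite.map _ _
  -- key: on Vᗮ the operator X is small
  have hext : ∀ z : H, z ∈ Vᗮ → ‖X z‖ ≤ μ * ‖z‖ := by
    intro z hz
    by_contra hlt
    push_neg at hlt
    have hz0 : z ≠ 0 := by
      rintro rfl
      simp only [norm_zero, mul_zero, map_zero] at hlt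
      exact lt_irrefl 0 hlt
    have haz : 0 < (inner ℂ (A z) z : ℂ).re := by
      rw [hAre]
      have : (μ * ‖z‖)^2 < ‖X z‖^2 :=
        pow_lt_pow_left₀ hlt (by positivity) (by norm_num)
      nlinarith
    have hz_not : z ∉ p₀ := by
      intro hzp
      have hmem : A z ∈ V := Submodule.mem_map_of_mem hzp
      have := (Submodule.mem_orthogonal V z).mp hz _ hmem
      rw [this] at haz
      simp at haz
    set p' := p₀ ⊔ Submodule.span ℂ {z} with hp'
    have hgood' : ∀ x ∈ p', x ≠ 0 → μ * ‖x‖ < ‖X x‖ := by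
      intro x hx hxne
      rw [Submodule.mem_sup] at hx
      obtain ⟨y, hy, w, hw, rfl⟩ := hx
      obtain ⟨t, rfl⟩ := Submodule.mem_span_singleton.mp hw
      have hyz : (inner ℂ (A y) z : ℂ) = 0 :=
        (Submodule.mem_orthogonal V z).mp hz _ (Submodule.mem_map_of_mem hy)
      have hzy : (inner ℂ (A z) y : ℂ) = 0 := by
        rw [← inner_conj_symm, ← hAsa, hyz, map_zero]
      have hpos : 0 < (inner ℂ (A (y + t • z)) (y + t • z) : ℂ).re := by
        have hexp : (inner ℂ (A (y + t • z)) (y + t • z) : ℂ)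
            = inner ℂ (A y) y + (Complex.normSq t : ℂ) * inner ℂ (A z) z := by
          simp only [map_add, ContinuousLinearMap.map_smul, inner_add_left,
            inner_add_right, inner_smul_left, inner_smul_right, hyz, hzy,
            mul_zero, zero_add, add_zero, smul_eq_mul]
          rw [Complex.normSq_eq_conj_mul_self]
          ring
        rw [hexp, Complex.add_re, Complex.re_ofReal_mul]
        have hy_nonneg : 0 ≤ (inner ℂ (A y) y : ℂ).re := by
          rcases eq_or_ne y 0 with rfl | hy0
          · simp
          · have := hgood y hy hy0
            rw [hAre]
            have : (μ * ‖y‖)^2 < ‖X y‖^2 :=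
              pow_lt_pow_left₀ this (by positivity) (by norm_num)
            nlinarith
        rcases eq_or_ne t 0 with rfl | ht0
        · have hy0 : y ≠ 0 := by simpa using hxne
          have := hgood y hy hy0
          have h2 : (μ * ‖y‖)^2 < ‖X y‖^2 :=
            pow_lt_pow_left₀ this (by positivity) (by norm_num)
          rw [hAre]
          simp only [Complex.normSq_zero]
          nlinarith
        · have h1 : 0 < Complex.normSq t := Complex.normSq_pos.mpr ht0
          nlinarith
      have := hAre (y + t • z) ▸ hpos
      have hsq : (μ * ‖y + t • z‖)^2 < ‖X (y + t • z)‖^2 := by nlinarith [norm_nonneg (y + t • z), sq_nonneg (μ * ‖y + t • z‖)]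
      exact lt_of_pow_lt_pow_left₀ 2 (norm_nonneg _) hsq
    haveI : FiniteDimensional ℂ ↥p' := by
      apply Submodule.finiteDimensional_sup
    have hzp' : z ∈ p' := Submodule.mem_sup_right (Submodule.mem_span_singleton_self z)
    have hlt'' : p₀ < p' := lt_of_le_of_ne le_sup_left (fun h => hz_not (h ▸ hzp'))
    have hr' : n₀ < Module.finrank ℂ ↥p' := hrank ▸ Submodule.finrank_lt_finrank_of_lt hlt''
    have hle' : Module.finrank ℂ ↥p' ≤ N := hgb p' hgood'
    exact Nat.findGreatest_is_greatest hr' hle' ⟨p', hgood', inferInstance, rfl⟩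
  refine ⟨V, V.subtypeL ∘L V.orthogonalProjectionOnto, inferInstance, ?_,
    isSelfAdjoint_starProjection V, fun x => (V.orthogonalProjectionOnto x).2, ?_⟩
  · have h1 : Module.finrank ℂ ↥V ≤ n₀ := hrank ▸ Submodule.finrank_map_le _ _
    calc ((Module.finrank ℂ ↥V : ℕ) : ℝ≥0∞) ≤ (n₀ : ℝ≥0∞) := by exact_mod_cast h1
      _ ≤ snCount X μ := hrank ▸ le_snCount hgood
  · intro x
    set Px : H := (V.subtypeL ∘L V.orthogonalProjectionOnto) x with hPx
    have hmemV : x - Px ∈ Vᗮ := by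
      simpa [hPx] using Submodule.sub_starProjection_mem_orthogonal (K := V) x
    have h1 : ‖X (x - Px)‖ ≤ μ * ‖x - Px‖ := hext _ hmemV
    have h2 : ‖x - Px‖ ≤ ‖x‖ := by
      have hPV : Px ∈ V := (V.orthogonalProjectionOnto x).2
      have hinner : (inner ℂ Px (x - Px) : ℂ) = 0 :=
        (Submodule.mem_orthogonal V (x - Px)).mp hmemV _ hPV
      have hpyth : ‖x‖^2 = ‖Px‖^2 + ‖x - Px‖^2 := by
        have := @norm_add_sq ℂ _ _ _ _ Px (x - Px)
        simp only [hinner, map_zero] at this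
        simpa using this
      nlinarith [norm_nonneg Px, norm_nonneg (x - Px), norm_nonneg x]
    calc ‖X (x - Px)‖ ≤ μ * ‖x - Px‖ := h1
      _ ≤ μ * ‖x‖ := by nlinarith
end Aux3

section Aux4

open ContinuousLinearMap

variable {H : Type*} {G : Type*}
  [NormedAddCommGroup H] [InnerProductSpace ℂ H] [CompleteSpace H]
  [NormedAddCommGroup G] [InnerProductSpace ℂ G] [CompleteSpace G]

set_option maxHeartbeats 1000000 in
lemma count_bound (L : H →L[ℂ] G) (U C : G →L[ℂ] G) (hU : ‖U‖ ≤ 1)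
    {lam ε μ : ℝ} (hε : 0 < ε) (hμ : 0 < μ) (hlam : lam = (1 + ε) * μ ^ 2)
    (hLfin : snCount L μ ≠ ⊤) (hCfin : snCount C ε ≠ ⊤) :
    snCount ((ContinuousLinearMap.adjoint L) ∘L ((U - C) ∘L L)) lam
      ≤ 2 * snCount L μ + snCount C ε := by
  classical
  obtain ⟨VL, P, hVLfd, hVLrank, hPsa, hPmem, hPbound⟩ := exists_good_proj L hμ hLfin
  obtain ⟨VC, Q, hVCfd, hVCrank, hQsa, hQmem, hQbound⟩ := exists_good_proj C hε hCfin
  set L₁ : H →L[ℂ] G := L - L ∘L P with hL₁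
  set C₁ : G →L[ℂ] G := C - C ∘L Q with hC₁
  set B₁ : G →L[ℂ] G := U - C₁ with hB₁
  set R : H →L[ℂ] H := (ContinuousLinearMap.adjoint L) ∘L ((U - C) ∘L L) with hR
  set Gop : H →L[ℂ] H := (ContinuousLinearMap.adjoint L₁) ∘L (B₁ ∘L L₁) with hGop
  -- the norm bound on Gop
  have hL₁bound : ∀ x : H, ‖L₁ x‖ ≤ μ * ‖x‖ := by
    intro x
    have : L₁ x = L (x - P x) := by simp [hL₁, map_sub]
    rw [this]; exact hPbound x
  have hL₁norm : ‖L₁‖ ≤ μ := opNorm_le_bound _ hμ.le hL₁bound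
  have hB₁bound : ∀ y : G, ‖B₁ y‖ ≤ (1 + ε) * ‖y‖ := by
    intro y
    have hC₁ : ‖C₁ y‖ ≤ ε * ‖y‖ := by
      have : C₁ y = C (y - Q y) := by simp [hC₁, map_sub]
      rw [this]; exact hQbound y
    have hUy : ‖U y‖ ≤ ‖y‖ := by
      calc ‖U y‖ ≤ ‖U‖ * ‖y‖ := le_opNorm _ _
        _ ≤ 1 * ‖y‖ := by have := norm_nonneg y; nlinarith
        _ = ‖y‖ := one_mul _
    calc ‖B₁ y‖ = ‖U y - C₁ y‖ := by simp [hB₁]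
      _ ≤ ‖U y‖ + ‖C₁ y‖ := norm_sub_le _ _
      _ ≤ ‖y‖ + ε * ‖y‖ := add_le_add hUy hC₁
      _ = (1 + ε) * ‖y‖ := by ring
  have hGbound : ∀ x : H, ‖Gop x‖ ≤ lam * ‖x‖ := by
    intro x
    have hadnorm : ‖ContinuousLinearMap.adjoint L₁‖ = ‖L₁‖ :=
      LinearIsometryEquiv.norm_map ContinuousLinearMap.adjoint L₁
    calc ‖Gop x‖ = ‖(ContinuousLinearMap.adjoint L₁) (B₁ (L₁ x))‖ := by simp [hGop]
      _ ≤ ‖ContinuousLinearMap.adjoint L₁‖ * ‖B₁ (L₁ x)‖ := le_opNorm _ _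
      _ ≤ μ * ‖B₁ (L₁ x)‖ := by
          have h : ‖ContinuousLinearMap.adjoint L₁‖ ≤ μ := hadnorm ▸ hL₁norm
          exact mul_le_mul_of_nonneg_right h (norm_nonneg _)
      _ ≤ μ * ((1 + ε) * ‖L₁ x‖) :=
          mul_le_mul_of_nonneg_left (hB₁bound (L₁ x)) hμ.le
      _ ≤ μ * ((1 + ε) * (μ * ‖x‖)) := by
          have h1 := mul_le_mul_of_nonneg_left (hL₁bound x) (by linarith : (0:ℝ) ≤ 1 + ε)
          exact mul_le_mul_of_nonneg_left h1 hμ.le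
      _ = lam * ‖x‖ := by rw [hlam]; ring
  -- the finite-dimensional window W
  set f₂ : H →L[ℂ] H := (ContinuousLinearMap.adjoint L₁) ∘L (B₁ ∘L L) with hf₂
  set f₃ : G →L[ℂ] H := (ContinuousLinearMap.adjoint L) ∘L C with hf₃
  set W : Submodule ℂ H := (VL ⊔ VL.map (f₂ : H →ₗ[ℂ] H)) ⊔ VC.map (f₃ : G →ₗ[ℂ] H)
    with hW
  haveI : FiniteDimensional ℂ ↥(VL.map (f₂ : H →ₗ[ℂ] H)) := Module.Finite.map _ _
  haveI : FiniteDimensional ℂ ↥(VC.map (f₃ : G →ₗ[ℂ] H)) := Module.Finite.map _ _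
  haveI hWfd : FiniteDimensional ℂ ↥W := by
    apply Submodule.finiteDimensional_sup
  -- decomposition of the remainder
  have hadj₁ : ContinuousLinearMap.adjoint L₁
      = ContinuousLinearMap.adjoint L - P ∘L ContinuousLinearMap.adjoint L := by
    rw [hL₁, map_sub, adjoint_comp, hPsa.adjoint_eq]
  have hRdecomp : ∀ x : H, R x - Gop x ∈ W := by
    intro x
    have hw₁ : P ((ContinuousLinearMap.adjoint L) (B₁ (L x))) ∈ W :=
      Submodule.mem_sup_left (Submodule.mem_sup_left (hPmem _))
    have hw₂ : f₂ (P x) ∈ W :=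
      Submodule.mem_sup_left (Submodule.mem_sup_right
        (Submodule.mem_map_of_mem (hPmem x)))
    have hw₃ : f₃ (Q (L x)) ∈ W :=
      Submodule.mem_sup_right (Submodule.mem_map_of_mem (hQmem _))
    have key : R x - Gop x
        = P ((ContinuousLinearMap.adjoint L) (B₁ (L x))) + f₂ (P x) - f₃ (Q (L x)) := by
      simp only [hR, hGop, hf₂, hf₃, hadj₁, hB₁, hC₁, hL₁, comp_apply, sub_apply, adjoint_comp, hPsa.adjoint_eq,
        map_sub]
      abel
    rw [key]
    exact sub_mem (add_mem hw₁ hw₂) hw₃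
  -- counting
  have hcount : snCount R lam ≤ (Module.finrank ℂ ↥W : ℝ≥0∞) := by
    have : ∀ p : Submodule ℂ H, (∀ x ∈ p, x ≠ 0 → lam * ‖x‖ < ‖R x‖) →
        Module.finrank ℂ ↥p ≤ Module.finrank ℂ ↥W := by
      intro p hp
      set φ : ↥p →ₗ[ℂ] ↥W := LinearMap.codRestrict W
        ((R - Gop : H →L[ℂ] H).toLinearMap.comp p.subtype)
        (fun x => by simpa using hRdecomp (x : H)) with hφ
      have hinj : Function.Injective φ := by
        intro a b hab
        have hab' : (R - Gop) ((a:H)) = (R - Gop) ((b:H)) := by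
          have := congrArg (Subtype.val) hab
          simpa [hφ, LinearMap.codRestrict] using this
        have hmem : ((a:H) - (b:H)) ∈ p := sub_mem a.2 b.2
        have hzero : (R - Gop) ((a:H) - (b:H)) = 0 := by
          rw [map_sub, hab', sub_self]
        by_contra hne
        have hsubne : (a:H) - (b:H) ≠ 0 := by
          intro h
          apply hne
          exact Subtype.ext (by rwa [sub_eq_zero] at h)
        have h1 := hp _ hmem hsubne
        have h2 : R ((a:H) - (b:H)) = Gop ((a:H) - (b:H)) := by
          have := hzero
          rw [ContinuousLinearMap.sub_apply, sub_eq_zero] at this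
          exact this
        rw [h2] at h1
        exact absurd h1 (not_lt.mpr (hGbound _))
      exact LinearMap.finrank_le_finrank_of_injective hinj
    refine iSup₂_le fun p hp => ?_
    exact_mod_cast this p hp
  -- the rank of W
  have hrankW : (Module.finrank ℂ ↥W : ℝ≥0∞) ≤ 2 * snCount L μ + snCount C ε := by
    have h1 : Module.finrank ℂ ↥W
        ≤ (Module.finrank ℂ ↥VL + Module.finrank ℂ ↥(VL.map (f₂ : H →ₗ[ℂ] H)))
          + Module.finrank ℂ ↥(VC.map (f₃ : G →ₗ[ℂ] H)) :=
      le_trans (finrank_sup_le' _ _) (by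
        have := finrank_sup_le' VL (VL.map (f₂ : H →ₗ[ℂ] H))
        omega)
    have h2 : Module.finrank ℂ ↥(VL.map (f₂ : H →ₗ[ℂ] H)) ≤ Module.finrank ℂ ↥VL :=
      Submodule.finrank_map_le _ _
    have h3 : Module.finrank ℂ ↥(VC.map (f₃ : G →ₗ[ℂ] H)) ≤ Module.finrank ℂ ↥VC :=
      Submodule.finrank_map_le _ _
    calc (Module.finrank ℂ ↥W : ℝ≥0∞)
        ≤ ((Module.finrank ℂ ↥VL + Module.finrank ℂ ↥VL
            + Module.finrank ℂ ↥VC : ℕ) : ℝ≥0∞) := by exact_mod_cast by omega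
      _ = (Module.finrank ℂ ↥VL : ℝ≥0∞) + (Module.finrank ℂ ↥VL : ℝ≥0∞)
            + (Module.finrank ℂ ↥VC : ℝ≥0∞) := by push_cast; rfl
      _ ≤ snCount L μ + snCount L μ + snCount C ε := by
          exact add_le_add (add_le_add hVLrank hVLrank) hVCrank
      _ = 2 * snCount L μ + snCount C ε := by ring
  exact hcount.trans hrankW

end Aux4

section Aux5

open ContinuousLinearMap

variable {H : Type*} {G : Type*}
  [NormedAddCommGroup H] [InnerProductSpace ℂ H] [CompleteSpace H]
  [NormedAddCommGroup G] [InnerProductSpace ℂ G] [CompleteSpace G]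

set_option maxHeartbeats 1000000 in
lemma resolvent_rep (B : BasePerturbation H) (P : PerturbationData (G := G) B) :
    ∃ Cop : G →L[ℂ] G,
      (IsCompactOperator ⇑P.S → IsCompactOperator ⇑Cop) ∧
      B.sqrtAinv.comp B.sqrtAinv - P.AVinv
        = (ContinuousLinearMap.adjoint (P.S.comp B.sqrtAinv)) ∘L
            ((P.U - Cop) ∘L (P.S.comp B.sqrtAinv)) := by
  classical
  obtain ⟨c, hc, hpos⟩ := P.pos
  set D : H →L[ℂ] H := B.sqrtAinv with hD
  set S : H →L[ℂ] G := P.S with hS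
  set U : G →L[ℂ] G := P.U with hU
  set T : H →L[ℂ] H := P.T with hT
  set M : H →L[ℂ] H := (1 : H →L[ℂ] H) + T with hM
  have hre : ∀ z : ℂ, RCLike.re z = z.re := fun z => congrFun RCLike.re_eq_complex_re z
  -- coercivity of M
  have hcoer : ∀ f : H, c * ‖f‖ ^ 2 ≤ (inner ℂ (M f) f : ℂ).re := by
    intro f
    have h1 : (inner ℂ (M f) f : ℂ) = inner ℂ f f + inner ℂ (U (S f)) (S f) := by
      have hTf : T f = (ContinuousLinearMap.adjoint S) (U (S f)) := by
        rw [hT, P.hT]; rfl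
      simp only [hM, add_apply, ContinuousLinearMap.one_apply, inner_add_left, hTf, adjoint_inner_left]
    rw [h1, Complex.add_re]
    have h2 : (inner ℂ f f : ℂ).re = ‖f‖ ^ 2 := by
      rw [← hre]; exact inner_self_eq_norm_sq f
    rw [h2]
    exact hpos f
  have hlow : ∀ f : H, c * ‖f‖ ≤ ‖M f‖ := by
    intro f
    rcases eq_or_ne f 0 with rfl | hf
    · simp
    · have h0 : 0 < ‖f‖ := norm_pos_iff.mpr hf
      have h1 : c * ‖f‖ ^ 2 ≤ (inner ℂ (M f) f : ℂ).re := hcoer f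
      have h2 : (inner ℂ (M f) f : ℂ).re ≤ ‖(inner ℂ (M f) f : ℂ)‖ := Complex.re_le_norm _
      have h3 : ‖(inner ℂ (M f) f : ℂ)‖ ≤ ‖M f‖ * ‖f‖ := norm_inner_le_norm _ _
      have := h1.trans (h2.trans h3)
      have hsq : c * ‖f‖ * ‖f‖ ≤ ‖M f‖ * ‖f‖ := by nlinarith
      exact le_of_mul_le_mul_right hsq h0
  -- M is bijective
  have hker : LinearMap.ker (M : H →ₗ[ℂ] H) = ⊥ := by
    rw [LinearMap.ker_eq_bot']
    intro x hx
    have := hlow x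
    rw [show M x = 0 from hx] at this
    simp only [norm_zero] at this
    have : ‖x‖ ≤ 0 := by nlinarith
    exact norm_le_zero_iff.mp this
  have hanti : AntilipschitzWith (⟨c⁻¹, inv_nonneg.mpr hc.le⟩ : ℝ≥0) M := by
    apply ContinuousLinearMap.antilipschitz_of_bound
    intro x
    have := hlow x
    show ‖x‖ ≤ c⁻¹ * ‖M x‖
    rw [← mul_le_mul_iff_right₀ hc, ← mul_assoc, mul_inv_cancel₀ hc.ne', one_mul]
    exact this
  have hclosed : IsClosed ((LinearMap.range (M : H →ₗ[ℂ] H) : Submodule ℂ H) : Set H) := by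
    have := hanti.isClosed_range M.uniformContinuous
    rwa [LinearMap.coe_range]
  haveI : CompleteSpace ↥(LinearMap.range (M : H →ₗ[ℂ] H) : Submodule ℂ H) :=
    hclosed.completeSpace_coe
  have horth : (LinearMap.range (M : H →ₗ[ℂ] H) : Submodule ℂ H)ᗮ = ⊥ := by
    rw [Submodule.eq_bot_iff]
    intro y hy
    have hMy : M y ∈ (LinearMap.range (M : H →ₗ[ℂ] H) : Submodule ℂ H) := LinearMap.mem_range_self _ y
    have h0 : (inner ℂ (M y) y : ℂ) = 0 := (Submodule.mem_orthogonal _ y).mp hy _ hMy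
    have := hcoer y
    rw [h0] at this
    simp only [Complex.zero_re] at this
    have : ‖y‖ ^ 2 ≤ 0 := by nlinarith
    have : ‖y‖ = 0 := by nlinarith [norm_nonneg y, sq_nonneg ‖y‖]
    exact norm_eq_zero.mp this
  have htop : LinearMap.range (M : H →ₗ[ℂ] H) = ⊤ := by
    have := congrArg Submodule.orthogonal horth
    rwa [Submodule.orthogonal_orthogonal, Submodule.bot_orthogonal_eq_top] at this
  set e := ContinuousLinearEquiv.ofBijective M hker htop with he
  set Φ : H →L[ℂ] H := (e.symm : H →L[ℂ] H) with hΦ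
  have hecoe : ∀ x, e x = M x := fun _ => rfl
  have hΦM : ∀ x, Φ (M x) = x := by
    intro x
    rw [hΦ]
    show e.symm (M x) = x
    rw [← hecoe]
    exact e.symm_apply_apply x
  have hMΦ : ∀ x, M (Φ x) = x := by
    intro x
    rw [hΦ]
    show M (e.symm x) = x
    rw [← hecoe]
    exact e.apply_symm_apply x
  -- X = Φ ∘ D pointwise
  have hXeq : ∀ x, P.X x = Φ (D x) := by
    intro x
    have h1 : M (P.X x) = D x := congrArg (fun f : H →L[ℂ] H => f x) P.hX
    rw [← h1, hΦM]
  -- key algebraic identity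
  have hkey : ∀ u : H, u - Φ u = T u - T (Φ (T u)) := by
    intro u
    have hMapp : ∀ v : H, M v = v + T v := by
      intro v; simp [hM]
    have hsum : Φ u + Φ (T u) = u := by
      rw [← map_add]
      rw [show u + T u = M u from (hMapp u).symm]
      exact hΦM u
    have h1 : Φ u + T (Φ u) = u := by
      rw [show Φ u + T (Φ u) = M (Φ u) from (hMapp (Φ u)).symm]
      exact hMΦ u
    have h2 : u - Φ u = T (Φ u) := (eq_sub_of_add_eq' h1).symm
    have h3 : Φ u = u - Φ (T u) := eq_sub_of_add_eq hsum
    rw [h2, h3, map_sub]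
  -- assemble
  set W : G →L[ℂ] H := Φ ∘L ((ContinuousLinearMap.adjoint S) ∘L U) with hW
  refine ⟨U ∘L (S ∘L W), ?_, ?_⟩
  · intro hcompact
    have h1 : IsCompactOperator (⇑S ∘ ⇑W) := hcompact.comp_clm W
    have h2 : IsCompactOperator (⇑U ∘ (⇑S ∘ ⇑W)) := h1.continuous_comp U.continuous
    have : ⇑(U ∘L (S ∘L W)) = ⇑U ∘ (⇑S ∘ ⇑W) := by
      funext x; simp [comp_apply]
    rwa [this]
  · have hadjL : ContinuousLinearMap.adjoint (S.comp D) = D ∘L (ContinuousLinearMap.adjoint S) := by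
      rw [adjoint_comp, B.sqrtAinv_sa.adjoint_eq]
    ext x
    have hTapp : ∀ v : H, T v = (ContinuousLinearMap.adjoint S) (U (S v)) := by
      intro v; rw [hT, P.hT]; rfl
    have lhs_eq : (B.sqrtAinv.comp B.sqrtAinv - P.AVinv) x = D (D x - Φ (D x)) := by
      simp only [sub_apply, comp_apply, P.hAVinv, map_sub, hXeq, ← hD]
    rw [lhs_eq]
    have rhs_eq : ((ContinuousLinearMap.adjoint (P.S.comp B.sqrtAinv)) ∘L
        ((P.U - U ∘L (S ∘L W)) ∘L (P.S.comp B.sqrtAinv))) x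
        = D (T (D x) - T (Φ (T (D x)))) := by
      have : P.S.comp B.sqrtAinv = S.comp D := rfl
      rw [this, comp_apply, comp_apply, hadjL]
      simp only [comp_apply, sub_apply, hW, map_sub]
      rw [← hTapp]
      congr 1
      rw [← hTapp (Φ (T (D x)))]
    rw [rhs_eq, ← hkey]

end Aux5

section Aux6

lemma limsup_add_le_my {α : Type*} {F : Filter α} (u v : α → ℝ≥0∞) :
    Filter.limsup (fun x => u x + v x) F ≤ Filter.limsup u F + Filter.limsup v F := by
  by_cases htop : Filter.limsup u F + Filter.limsup v F = ⊤
  · rw [htop]; exact le_top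
  have hu : Filter.limsup u F ≠ ⊤ := fun h => htop (by simp [h])
  have hv : Filter.limsup v F ≠ ⊤ := fun h => htop (by simp [h])
  refine ENNReal.le_of_forall_pos_le_add fun η hη _ => ?_
  have hη2 : (0:ℝ≥0) < η / 2 := by positivity
  have h1 : ∀ᶠ x in F, u x < Filter.limsup u F + (η/2 : ℝ≥0) :=
    Filter.eventually_lt_of_limsup_lt
      (ENNReal.lt_add_right hu (by exact_mod_cast hη2.ne'))
  have h2 : ∀ᶠ x in F, v x < Filter.limsup v F + (η/2 : ℝ≥0) :=
    Filter.eventually_lt_of_limsup_lt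
      (ENNReal.lt_add_right hv (by exact_mod_cast hη2.ne'))
  have h3 : ∀ᶠ x in F, u x + v x
      ≤ (Filter.limsup u F + Filter.limsup v F) + (η : ℝ≥0∞) := by
    filter_upwards [h1, h2] with x hx1 hx2
    have := add_le_add hx1.le hx2.le
    calc u x + v x ≤ (Filter.limsup u F + (η/2 : ℝ≥0)) + (Filter.limsup v F + (η/2 : ℝ≥0)) := this
      _ = (Filter.limsup u F + Filter.limsup v F) + (((η/2 : ℝ≥0) : ℝ≥0∞) + ((η/2 : ℝ≥0) : ℝ≥0∞)) := by ring
      _ = (Filter.limsup u F + Filter.limsup v F) + (η : ℝ≥0∞) := by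
          rw [← ENNReal.coe_add]
          congr 1
          exact_mod_cast by
            rw [← NNReal.coe_inj]
            push_cast
            ring
  exact Filter.limsup_le_of_le (by isBoundedDefault) h3

end Aux6


set_option maxHeartbeats 1000000

/-- In the abstract perturbation setting, suppose that `‖U‖ ≤ 1`,
that the operator `F γ A^{-1/2} : H → G` is compact, and that for some `θ > 0` the
singular number bound `n^sup(F γ A^{-1}, 2θ) = 𝔪 < ∞` holds.  Then the resolvent
difference `R_V = A^{-1} - (A_V)^{-1}` satisfies `n^sup(R_V, θ) ≤ 2 𝔪`. -/
theorem nsup_resolvent_difference_le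
    {H : Type*} {G : Type*}
    [NormedAddCommGroup H] [InnerProductSpace ℂ H] [CompleteSpace H]
    [NormedAddCommGroup G] [InnerProductSpace ℂ G] [CompleteSpace G]
    (B : BasePerturbation H) (P : PerturbationData (G := G) B)
    (θ : ℝ) (hθ : 0 < θ) (𝔪 : ℝ≥0∞) (h𝔪 : 𝔪 ≠ ⊤)
    (hU : ‖P.U‖ ≤ 1) (hS : IsCompactOperator P.S)
    (hsn : nsup (P.S.comp B.sqrtAinv) (2 * θ) = 𝔪) :
    nsup (B.sqrtAinv.comp B.sqrtAinv - P.AVinv) θ ≤ 2 * 𝔪 := by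
  classical
  obtain ⟨Cop, hCopc, hRV⟩ := resolvent_rep B P
  have hCopcompact : IsCompactOperator ⇑Cop := hCopc hS
  set L : H →L[ℂ] G := P.S.comp B.sqrtAinv with hLdef
  rw [hRV]
  set R : H →L[ℂ] H := (ContinuousLinearMap.adjoint L) ∘L ((P.U - Cop) ∘L L) with hRdef
  -- eventual finiteness of the counting function of L
  set g : ℝ → ℝ≥0∞ := fun mu => ENNReal.ofReal (mu ^ (2*θ)) * snCount L mu with hg
  have hlim : Filter.limsup g (𝓝[>] (0:ℝ)) = 𝔪 := hsn
  have hfinL : ∀ᶠ mu in 𝓝[>] (0:ℝ), snCount L mu ≠ ⊤ := by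
    have h1 : Filter.limsup g (𝓝[>] (0:ℝ)) < 𝔪 + 1 := by
      rw [hlim]; exact ENNReal.lt_add_right h𝔪 one_ne_zero
    have h2 := Filter.eventually_lt_of_limsup_lt h1
    filter_upwards [h2, self_mem_nhdsWithin] with mu hmu hmu0
    intro htop
    have hpos : ENNReal.ofReal (mu ^ (2*θ)) ≠ 0 := by
      rw [ne_eq, ENNReal.ofReal_eq_zero, not_le]
      have : (0:ℝ) < mu := hmu0
      positivity
    rw [hg] at hmu
    simp only [htop, ENNReal.mul_top hpos] at hmu
    exact not_top_lt hmu
  -- choose the small parameter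
  refine ENNReal.le_of_forall_pos_le_add fun η hη h2top => ?_
  set δ : ℝ≥0∞ := (η : ℝ≥0∞) / (2 * 𝔪 + 1) with hδ
  have hδpos : 0 < δ := ENNReal.div_pos (by exact_mod_cast hη.ne')
    (by
      refine ENNReal.add_ne_top.mpr ⟨?_, ENNReal.one_ne_top⟩
      exact ENNReal.mul_ne_top (by norm_num) h𝔪)
  have hδtop : δ ≠ ⊤ := by
    rw [hδ]
    exact (ENNReal.div_lt_top ENNReal.coe_ne_top (by simp)).ne
  set δr : ℝ := δ.toReal with hδr
  have hδrpos : 0 < δr := ENNReal.toReal_pos hδpos.ne' hδtop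
  set ε : ℝ := (1 + δr) ^ (θ⁻¹) - 1 with hεdef
  have hbase : (1:ℝ) < 1 + δr := by linarith
  have hεpos : 0 < ε := by
    have h1 : (1:ℝ) < (1 + δr) ^ (θ⁻¹) := by
      rw [Real.one_lt_rpow_iff_of_pos (by linarith)]
      exact Or.inl ⟨hbase, by positivity⟩
    rw [hεdef]; linarith
  have hεθ : (1 + ε) ^ θ = 1 + δr := by
    rw [hεdef]
    have h1 : 1 + ((1 + δr) ^ θ⁻¹ - 1) = (1 + δr) ^ θ⁻¹ := by ring
    rw [h1, ← Real.rpow_mul (by linarith : (0:ℝ) ≤ 1 + δr),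
      inv_mul_cancel₀ hθ.ne', Real.rpow_one]
  have hc' : ENNReal.ofReal ((1+ε)^θ) = 1 + δ := by
    rw [hεθ, ENNReal.ofReal_add (by norm_num) hδrpos.le, ENNReal.ofReal_one,
      hδr, ENNReal.ofReal_toReal hδtop]
  -- the substitution map
  set m : ℝ → ℝ := fun lam => Real.sqrt (lam / (1+ε)) with hm
  have hmt : Filter.Tendsto m (𝓝[>] (0:ℝ)) (𝓝[>] (0:ℝ)) := by
    rw [tendsto_nhdsWithin_iff]
    constructor
    · have hc : Filter.Tendsto m (𝓝 0) (𝓝 0) := by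
        have : Continuous m := Real.continuous_sqrt.comp (continuous_id.div_const (1+ε))
        have h0 : m 0 = 0 := by simp [hm]
        simpa [h0] using this.tendsto 0
      exact hc.mono_left nhdsWithin_le_nhds
    · filter_upwards [self_mem_nhdsWithin] with lam hlam
      have : (0:ℝ) < lam := hlam
      have h1e : (0:ℝ) < 1 + ε := by linarith
      exact Real.sqrt_pos.mpr (div_pos this h1e)
  have hεC : snCount Cop ε ≠ ⊤ := snCount_ne_top_of_isCompactOperator hCopcompact hεpos
  set a : ℝ≥0∞ := (1 + δ) * 2 with ha
  -- eventual comparison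
  have hEv : ∀ᶠ lam in 𝓝[>] (0:ℝ),
      ENNReal.ofReal (lam ^ θ) * snCount R lam
        ≤ a * g (m lam) + ENNReal.ofReal (lam ^ θ) * snCount Cop ε := by
    filter_upwards [hmt.eventually hfinL, self_mem_nhdsWithin] with lam hfm hlam0
    have hlam0' : (0:ℝ) < lam := hlam0
    have h1e : (0:ℝ) < 1 + ε := by linarith
    have hmpos : 0 < m lam := Real.sqrt_pos.mpr (div_pos hlam0' h1e)
    have hlameq : lam = (1 + ε) * (m lam)^2 := by
      rw [hm]
      simp only []
      rw [Real.sq_sqrt (le_of_lt (div_pos hlam0' h1e))]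
      field_simp
    have hcount := count_bound L P.U Cop hU hεpos hmpos hlameq hfm hεC
    have hsplit : ENNReal.ofReal (lam ^ θ) = (1+δ) * ENNReal.ofReal ((m lam) ^ (2*θ)) := by
      rw [← hc', ← ENNReal.ofReal_mul (by positivity)]
      congr 1
      conv_lhs => rw [hlameq]
      rw [Real.mul_rpow (by linarith) (by positivity)]
      rw [← Real.rpow_natCast (m lam) 2, ← Real.rpow_mul hmpos.le]
      norm_num
    calc ENNReal.ofReal (lam ^ θ) * snCount R lam
        ≤ ENNReal.ofReal (lam ^ θ) * (2 * snCount L (m lam) + snCount Cop ε) :=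
          mul_le_mul_right hcount _
      _ = ENNReal.ofReal (lam ^ θ) * (2 * snCount L (m lam))
            + ENNReal.ofReal (lam ^ θ) * snCount Cop ε := by ring
      _ = a * g (m lam) + ENNReal.ofReal (lam ^ θ) * snCount Cop ε := by
          congr 1
          rw [hsplit, hg, ha]
          ring
  -- pass to the limsup
  have hstep1 : nsup R θ ≤ Filter.limsup
      (fun lam => a * g (m lam) + ENNReal.ofReal (lam ^ θ) * snCount Cop ε)
      (𝓝[>] (0:ℝ)) := by
    exact Filter.limsup_le_limsup hEv
  have hstep2 : Filter.limsup
      (fun lam => a * g (m lam) + ENNReal.ofReal (lam ^ θ) * snCount Cop ε)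
      (𝓝[>] (0:ℝ))
      ≤ Filter.limsup (fun lam => a * g (m lam)) (𝓝[>] (0:ℝ))
        + Filter.limsup (fun lam => ENNReal.ofReal (lam ^ θ) * snCount Cop ε)
          (𝓝[>] (0:ℝ)) := limsup_add_le_my _ _
  have htail : Filter.limsup (fun lam : ℝ => ENNReal.ofReal (lam ^ θ) * snCount Cop ε)
      (𝓝[>] (0:ℝ)) = 0 := by
    have h0 : Filter.Tendsto (fun lam : ℝ => ENNReal.ofReal (lam ^ θ)) (𝓝[>] (0:ℝ)) (𝓝 0) := by
      have hr : Filter.Tendsto (fun lam : ℝ => lam ^ θ) (𝓝[>] (0:ℝ)) (𝓝 0) := by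
        have hca : ContinuousAt (fun x : ℝ => x ^ θ) 0 :=
          Real.continuousAt_rpow_const 0 θ (Or.inr hθ.le)
        have h00 : (0:ℝ) ^ θ = 0 := Real.zero_rpow hθ.ne'
        have := hca.tendsto
        rw [h00] at this
        exact this.mono_left nhdsWithin_le_nhds
      have := (ENNReal.continuous_ofReal.tendsto 0).comp hr
      rw [ENNReal.ofReal_zero] at this
      exact this
    have := ENNReal.Tendsto.mul_const h0 (Or.inr hεC)
    rw [zero_mul] at this
    exact this.limsup_eq
  have hmain : Filter.limsup (fun lam => a * g (m lam)) (𝓝[>] (0:ℝ)) ≤ a * 𝔪 := by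
    rw [ENNReal.limsup_const_mul_of_ne_top (by
      rw [ha]
      exact ENNReal.mul_ne_top (ENNReal.add_ne_top.mpr ⟨ENNReal.one_ne_top, hδtop⟩) (by norm_num))]
    refine mul_le_mul_right ?_ a
    have hmap : Filter.limsup (fun lam => g (m lam)) (𝓝[>] (0:ℝ))
        = Filter.limsup g ((𝓝[>] (0:ℝ)).map m) := by
      rw [Filter.limsup, Filter.limsup, Filter.map_map]
      rfl
    rw [hmap, ← hlim]
    exact Filter.limsup_le_limsup_of_le hmt
  have hfinal : a * 𝔪 ≤ 2 * 𝔪 + η := by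
    have h1 : a * 𝔪 = 2 * 𝔪 + δ * (2 * 𝔪) := by rw [ha]; ring
    rw [h1]
    refine add_le_add_right ?_ _
    calc δ * (2 * 𝔪) ≤ δ * (2 * 𝔪 + 1) := mul_le_mul_right le_self_add _
      _ = η := by
          rw [hδ]
          exact ENNReal.div_mul_cancel (by
            intro h
            simp at h) (by
            refine ENNReal.add_ne_top.mpr ⟨?_, ENNReal.one_ne_top⟩
            exact ENNReal.mul_ne_top (by norm_num) h𝔪)
  calc nsup R θ ≤ _ := hstep1
    _ ≤ _ := hstep2
    _ = Filter.limsup (fun lam => a * g (m lam)) (𝓝[>] (0:ℝ)) + 0 := by rw [htail]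
    _ ≤ a * 𝔪 + 0 := add_le_add_left hmain 0
    _ = a * 𝔪 := by rw [add_zero]
    _ ≤ 2 * 𝔪 + η := hfinal


end SingPert
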